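/- Let A ∈ ℝ^{n×n}, C ∈ ℝ^{m×n}, let t > s ≥ 1 be integers, and let κ, σ > 0. Suppose that ‖O_s v‖ ≥ σ‖v‖ for every v ∈ ℝ^n (i.e. the smallest singular value of the order-s observability matrix O_s is at least σ), and that the largest singular value of O_t satisfies σ_max(O_t) ≤ κσ. Then ‖A^{t−s}‖_F ≤ √n · κ, and consequently for every positive integer j, ‖A^{j(t−s)}‖_F ≤ (√n · κ)^j. -/

import Mathlib

open scoped Matrix.Norms.L2Operator

/-- Euclidean norm of a real vector. -/
noncomputable def enormR {ι : Type*} [Fintype ι] (v : ι → ℝ) : ℝ :=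
  Real.sqrt (∑ i, (v i) ^ 2)

/-- Frobenius norm of a real matrix. -/
noncomputable def frobR {ι κ : Type*} [Fintype ι] [Fintype κ] (M : Matrix ι κ ℝ) : ℝ :=
  Real.sqrt (∑ i, ∑ j, (M i j) ^ 2)

/-- The order-`s` observability matrix `O_s = [C; CA; CA²; …; CA^{s−1}]` (row blocks indexed by
`Fin s`). -/
noncomputable def obsMatR (n m s : ℕ) (A : Matrix (Fin n) (Fin n) ℝ)
    (C : Matrix (Fin m) (Fin n) ℝ) : Matrix (Fin s × Fin m) (Fin n) ℝ :=
  fun ir j => (C * A ^ (ir.1 : ℕ)) ir.2 j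

lemma enormR_eq_norm {ι : Type*} [Fintype ι] (v : ι → ℝ) :
    enormR v = ‖(WithLp.equiv 2 (ι → ℝ)).symm v‖ := by
  rw [EuclideanSpace.norm_eq, enormR]
  congr 1
  refine Finset.sum_congr rfl fun i _ => ?_
  rw [Real.norm_eq_abs, sq_abs]
  rfl

lemma enormR_nonneg {ι : Type*} [Fintype ι] (v : ι → ℝ) : 0 ≤ enormR v :=
  Real.sqrt_nonneg _

lemma enormR_mono {ι κ : Type*} [Fintype ι] [Fintype κ] {v : ι → ℝ} {w : κ → ℝ}
    (h : ∑ i, (v i) ^ 2 ≤ ∑ i, (w i) ^ 2) : enormR v ≤ enormR w :=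
  Real.sqrt_le_sqrt h

lemma key_contraction (n m : ℕ) (A : Matrix (Fin n) (Fin n) ℝ) (C : Matrix (Fin m) (Fin n) ℝ)
    (s t : ℕ) (hst : s < t) (κ σ : ℝ) (hσ : 0 < σ)
    (hmin : ∀ v : Fin n → ℝ, σ * enormR v ≤ enormR ((obsMatR n m s A C).mulVec v))
    (hmax : ‖obsMatR n m t A C‖ ≤ κ * σ) (v : Fin n → ℝ) :
    enormR ((A ^ (t - s)).mulVec v) ≤ κ * enormR v := by
  set d := t - s with hd
  set w : Fin n → ℝ := (A ^ d).mulVec v with hw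
  have h1 : σ * enormR w ≤ enormR ((obsMatR n m s A C).mulVec w) := hmin w
  -- the rows of O_s * A^d are rows of O_t
  have hrow : ∀ (i : Fin s) (r : Fin m),
      (obsMatR n m s A C).mulVec w (i, r)
        = (obsMatR n m t A C).mulVec v (⟨(i : ℕ) + d, by omega⟩, r) := by
    intro i r
    have : (obsMatR n m s A C).mulVec w (i, r)
        = ((C * A ^ (i : ℕ) * A ^ d).mulVec v) r := by
      simp only [Matrix.mulVec, dotProduct, obsMatR, hw]
      simp [Matrix.mul_apply, Finset.mul_sum, Finset.sum_mul, mul_assoc]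
      rw [Finset.sum_comm]
    rw [this, Matrix.mul_assoc, ← pow_add]
    rfl
  have h2 : enormR ((obsMatR n m s A C).mulVec w)
      ≤ enormR ((obsMatR n m t A C).mulVec v) := by
    apply enormR_mono
    set f : Fin t × Fin m → ℝ := fun q => ((obsMatR n m t A C).mulVec v q) ^ 2 with hf
    set ι : Fin s × Fin m → Fin t × Fin m :=
      fun p => (⟨(p.1 : ℕ) + d, by omega⟩, p.2) with hι
    have hinj : Function.Injective ι := by
      intro p q h
      simp only [hι, Prod.mk.injEq, Fin.mk.injEq] at h
      exact Prod.ext (Fin.ext (by omega)) h.2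
    calc ∑ p : Fin s × Fin m, ((obsMatR n m s A C).mulVec w p) ^ 2
        = ∑ p : Fin s × Fin m, f (ι p) := by
          refine Finset.sum_congr rfl fun p _ => ?_
          rw [hf]
          exact congrArg (· ^ 2) (hrow p.1 p.2)
      _ = ∑ q ∈ Finset.univ.image ι, f q :=
          (Finset.sum_image (fun a _ b _ h => hinj h)).symm
      _ ≤ ∑ q : Fin t × Fin m, f q := by
          apply Finset.sum_le_sum_of_subset_of_nonneg (Finset.subset_univ _)
          intro q _ _
          exact sq_nonneg _
  have h3 : enormR ((obsMatR n m t A C).mulVec v) ≤ (κ * σ) * enormR v := by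
    rw [enormR_eq_norm, enormR_eq_norm]
    calc ‖(WithLp.equiv 2 _).symm ((obsMatR n m t A C).mulVec v)‖
        ≤ ‖obsMatR n m t A C‖ * ‖(WithLp.equiv 2 _).symm v‖ :=
          (obsMatR n m t A C).l2_opNorm_mulVec ((WithLp.equiv 2 _).symm v)
      _ ≤ (κ * σ) * ‖(WithLp.equiv 2 _).symm v‖ := by
          apply mul_le_mul_of_nonneg_right hmax (norm_nonneg _)
  have := h1.trans (h2.trans h3)
  nlinarith [enormR_nonneg v, enormR_nonneg w]

lemma frob_le_of_contraction {n : ℕ} (M : Matrix (Fin n) (Fin n) ℝ) (c : ℝ) (hc : 0 ≤ c)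
    (h : ∀ v : Fin n → ℝ, enormR (M.mulVec v) ≤ c * enormR v) :
    frobR M ≤ Real.sqrt n * c := by
  have hcol : ∀ j : Fin n, ∑ i, (M i j) ^ 2 ≤ c ^ 2 := by
    intro j
    have h1 : M.mulVec (Pi.single j 1) = fun i => M i j := by
      ext i
      simp [Matrix.mulVec_single]
    have h2 : enormR (Pi.single j (1:ℝ) : Fin n → ℝ) = 1 := by
      have hh : (∑ i, ((Pi.single j (1:ℝ) : Fin n → ℝ) i) ^ 2) = 1 := by
        simp [Pi.single_apply]
      rw [enormR, hh, Real.sqrt_one]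
    have := h (Pi.single j 1)
    rw [h1, h2, mul_one] at this
    have hnn : 0 ≤ ∑ i, (M i j) ^ 2 := Finset.sum_nonneg fun _ _ => sq_nonneg _
    calc ∑ i, (M i j) ^ 2 = (enormR fun i => M i j) ^ 2 := (Real.sq_sqrt hnn).symm
      _ ≤ c ^ 2 := by
          apply sq_le_sq' _ this
          linarith [enormR_nonneg fun i => M i j]
  rw [frobR]
  have : ∑ i, ∑ j, (M i j) ^ 2 ≤ n * c ^ 2 := by
    rw [Finset.sum_comm]
    calc ∑ j, ∑ i, (M i j) ^ 2 ≤ ∑ _j : Fin n, c ^ 2 :=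
          Finset.sum_le_sum fun j _ => hcol j
      _ = n * c ^ 2 := by simp
  calc Real.sqrt (∑ i, ∑ j, (M i j) ^ 2) ≤ Real.sqrt (n * c ^ 2) := Real.sqrt_le_sqrt this
    _ = Real.sqrt n * c := by
        rw [Real.sqrt_mul (by positivity), Real.sqrt_sq hc]

/-- If the smallest singular value of `O_s` is at least `σ` (i.e.
`‖O_s v‖ ≥ σ ‖v‖` for all `v`) and the largest singular value (operator norm) of `O_t` is at most
`κ σ` for some `t > s ≥ 1`, then `‖A^{t−s}‖_F ≤ √n κ`, and consequently
`‖A^{j(t−s)}‖_F ≤ (√n κ)^j` for every positive integer `j`. -/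
theorem powers_bounded_of_conditioned_observability (n m : ℕ)
    (A : Matrix (Fin n) (Fin n) ℝ) (C : Matrix (Fin m) (Fin n) ℝ)
    (s t : ℕ) (hs : 1 ≤ s) (hst : s < t) (κ σ : ℝ) (hκ : 0 < κ) (hσ : 0 < σ)
    (hmin : ∀ v : Fin n → ℝ, σ * enormR v ≤ enormR ((obsMatR n m s A C).mulVec v))
    (hmax : ‖obsMatR n m t A C‖ ≤ κ * σ) :
    frobR (A ^ (t - s)) ≤ Real.sqrt n * κ ∧
      ∀ j : ℕ, 1 ≤ j → frobR (A ^ (j * (t - s))) ≤ (Real.sqrt n * κ) ^ j := by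
  have hkey := key_contraction n m A C s t hst κ σ hσ hmin hmax
  have hiter : ∀ j : ℕ, ∀ v : Fin n → ℝ,
      enormR ((A ^ (j * (t - s))).mulVec v) ≤ κ ^ j * enormR v := by
    intro j
    induction j with
    | zero => intro v; simp [Matrix.one_mulVec]
    | succ k ih =>
      intro v
      have hsplit : A ^ ((k + 1) * (t - s)) = A ^ (t - s) * A ^ (k * (t - s)) := by
        rw [← pow_add]; ring_nf
      rw [hsplit]
      calc enormR ((A ^ (t - s) * A ^ (k * (t - s))).mulVec v)
          = enormR ((A ^ (t - s)).mulVec ((A ^ (k * (t - s))).mulVec v)) := by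
            rw [Matrix.mulVec_mulVec]
        _ ≤ κ * enormR ((A ^ (k * (t - s))).mulVec v) := hkey _
        _ ≤ κ * (κ ^ k * enormR v) := by
            apply mul_le_mul_of_nonneg_left (ih v) hκ.le
        _ = κ ^ (k + 1) * enormR v := by ring
  constructor
  · have := frob_le_of_contraction (A ^ (t - s)) κ hκ.le hkey
    exact this
  · intro j hj
    have h1 : frobR (A ^ (j * (t - s))) ≤ Real.sqrt n * κ ^ j :=
      frob_le_of_contraction _ _ (by positivity) (hiter j)
    rcases Nat.eq_zero_or_pos n with hn | hn
    · subst hn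
      have : frobR (A ^ (j * (t - s))) = 0 := by
        rw [frobR]; simp
      rw [this]
      positivity
    · have hsn : (1 : ℝ) ≤ Real.sqrt n := by
        rw [show (1:ℝ) = Real.sqrt 1 by simp]
        exact Real.sqrt_le_sqrt (by exact_mod_cast hn)
      calc frobR (A ^ (j * (t - s))) ≤ Real.sqrt n * κ ^ j := h1
        _ ≤ (Real.sqrt n) ^ j * κ ^ j := by
            apply mul_le_mul_of_nonneg_right (le_self_pow₀ hsn (by omega)) (by positivity)
        _ = (Real.sqrt n * κ) ^ j := (mul_pow _ _ _).symm
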